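/- Let k ≥ 4 be an integer and let G be a finite simple (P₂ ∪ kP₁)-free graph. Let C be a longest cycle of G with a fixed orientation and let h ∉ V(C) with N_G(h) ⊆ V(C) and d = |N_G(h)| ≥ k. Let v₁, …, v_d be the neighbors of h in the order they appear along C, let u_i = v_i⁺ and U = {u₁, …, u_d}. Suppose x ∈ V(C) satisfies x ∈ N_G(U) and x⁺ ∈ N_G(U), where (relabeling indices cyclically) x lies on the arc of C from u_d⁺ to v₁⁻ (so x ∉ N_G(h) ∪ {h}). Define l_x = min{ i ∈ [1,d] : u_i x ∈ E(G) } and r_x = max{ i ∈ [1,d] : u_i x⁺ ∈ E(G) }. Then: (i) N_G(x) ∩ U ⊆ {u_i : l_x ≤ i ≤ d} and |N_G(x) ∩ U| ≥ d − k + 2; (ii) N_G(x⁺) ∩ U ⊆ {u_i : 1 ≤ i ≤ r_x} and |N_G(x⁺) ∩ U| ≥ d − k + 1; (iii) r_x ≤ l_x, u_{l_x}⁺ ∉ N_G(h), N_G(u_{l_x}⁺) ∩ U ⊆ {u_i : r_x ≤ i ≤ l_x}, and |N_G(u_{l_x}⁺) ∩ U| ≥ d − k + 2. -/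

import Mathlib

open SimpleGraph Set

/-- `G` has no induced subgraph isomorphic to `P₂ ∪ kP₁`: there are no `k+2` distinct
vertices `x, y, z₁, …, z_k` with `xy ∈ E(G)` and no other edges among them. -/
def P2kP1Free {V : Type*} (G : SimpleGraph V) (k : ℕ) : Prop :=
  ¬ ∃ (x y : V) (z : Fin k → V),
      Function.Injective z ∧ (∀ i, z i ≠ x) ∧ (∀ i, z i ≠ y) ∧ x ≠ y ∧
      G.Adj x y ∧ (∀ i, ¬ G.Adj x (z i)) ∧ (∀ i, ¬ G.Adj y (z i)) ∧
      ∀ i j, ¬ G.Adj (z i) (z j)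

/-- `X` is an independent set of `G`. -/
def IsIndep {V : Type*} (G : SimpleGraph V) (X : Set V) : Prop :=
  ∀ x ∈ X, ∀ y ∈ X, ¬ G.Adj x y

/-- The neighbourhood `N_G(S) = ⋃_{x ∈ S} (N_G(x) \ S)` of a set `S`. -/
def setNbhd {V : Type*} (G : SimpleGraph V) (S : Set V) : Set V :=
  {v | v ∉ S ∧ ∃ u ∈ S, G.Adj u v}

/-- `G` is 1-tough: `|S| ≥ ω(G - S)` whenever `ω(G - S) ≥ 2`. -/
def OneTough {V : Type*} (G : SimpleGraph V) : Prop :=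
  ∀ S : Set V, 2 ≤ Nat.card (G.induce Sᶜ).ConnectedComponent →
    Nat.card (G.induce Sᶜ).ConnectedComponent ≤ S.ncard

/-- `G` is `m`-connected: `|V(G)| > m` and `G - S` is connected for every `S` with `|S| < m`. -/
def MConnected {V : Type*} (G : SimpleGraph V) (m : ℕ) : Prop :=
  m < Nat.card V ∧ ∀ S : Set V, S.ncard < m → (G.induce Sᶜ).Connected

/-- A cycle of `G` with a fixed orientation, given as an injective cyclic sequence of
`n ≥ 3` pairwise adjacent-in-sequence vertices; the successor of `f i` is `f (i + 1)`. -/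
def IsCycleMap {V : Type*} (G : SimpleGraph V) {n : ℕ} (f : ZMod n → V) : Prop :=
  3 ≤ n ∧ Function.Injective f ∧ ∀ i, G.Adj (f i) (f (i + 1))

/-- A longest cycle of `G`. -/
def IsLongestCycleMap {V : Type*} (G : SimpleGraph V) {n : ℕ} (f : ZMod n → V) : Prop :=
  IsCycleMap G f ∧ ∀ (m : ℕ) (g : ZMod m → V), IsCycleMap G g → m ≤ n

/-- `G` is hamiltonian: it has a cycle passing through all of its vertices. -/
def IsHamiltonianGraph {V : Type*} (G : SimpleGraph V) : Prop :=
  ∃ (n : ℕ) (f : ZMod n → V), IsCycleMap G f ∧ ∀ v, v ∈ Set.range f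

/-- The cycle `f` is an edge-dominating cycle of `G`: every connected component of
`G - V(C)` consists of exactly one vertex. -/
def IsEdgeDomCycle {V : Type*} (G : SimpleGraph V) {n : ℕ} (f : ZMod n → V) : Prop :=
  IsCycleMap G f ∧
    ∀ c : (G.induce (Set.range f)ᶜ).ConnectedComponent, Nat.card c.supp = 1

/-- The number of edges of `G` between two disjoint sets `S` and `T`. -/
noncomputable def eBetween {V : Type*} (G : SimpleGraph V) (S T : Set V) : ℕ :=
  {p : V × V | p.1 ∈ S ∧ p.2 ∈ T ∧ G.Adj p.1 p.2}.ncard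

section helperZZ
open List
/-- `f` precomposed with the natural cast `ℕ → ZMod n`. -/
def Fc {V : Type*} {n : ℕ} (f : ZMod n → V) : ℕ → V := fun t => f ((t : ℕ) : ZMod n)

/-- the relation `cast-distinct mod n` on ℕ -/
def CNe (n : ℕ) (a b : ℕ) : Prop := ((a : ZMod n) : ZMod n) ≠ ((b : ZMod n) : ZMod n)

section helpers
variable {V : Type*} {G : SimpleGraph V} {n : ℕ} {f : ZMod n → V}

lemma castNe {s t : ℕ} (h1 : s < t) (h2 : t < s + n) : CNe n s t := by
  intro h
  have := (ZMod.natCast_eq_natCast_iff s t n).1 h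
  have hd : n ∣ t - s := (Nat.modEq_iff_dvd' h1.le).1 this
  have := Nat.le_of_dvd (by omega) hd
  omega

lemma cNe_symm {s t : ℕ} (h : CNe n s t) : CNe n t s := Ne.symm h

lemma pw_rng (s m : ℕ) (hm : m ≤ n) : (range' s m).Pairwise (CNe n) := by
  refine (pairwise_lt_range' (s := s) (n := m)).imp_of_mem ?_
  intro a b ha hb hab
  rw [mem_range'_1] at ha hb
  exact castNe hab (by omega)

lemma pw_rng' (s m : ℕ) (hm : m ≤ n) : (range' s m).Pairwise (fun a b => CNe n b a) := by
  refine (pairwise_lt_range' (s := s) (n := m)).imp_of_mem ?_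
  intro a b ha hb hab
  rw [mem_range'_1] at ha hb
  exact cNe_symm (castNe hab (by omega))

lemma adjStep (hC : IsCycleMap G f) (t : ℕ) : G.Adj (Fc f t) (Fc f (t+1)) := by
  have := hC.2.2 (t : ZMod n)
  unfold Fc
  rwa [show ((t+1 : ℕ) : ZMod n) = (t : ZMod n) + 1 by push_cast; ring]

lemma chainA (hC : IsCycleMap G f) (s m : ℕ) :
    IsChain G.Adj ((range' s m).map (Fc f)) := by
  induction m generalizing s with
  | zero => simp
  | succ m ih =>
    rcases m with _ | m
    · simp [range'_succ]
    · rw [range'_succ, map_cons, range'_succ, map_cons]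
      refine List.IsChain.cons_cons (adjStep hC s) ?_
      have := ih (s+1)
      rwa [range'_succ, map_cons] at this

lemma chainW (hC : IsCycleMap G f) (s m : ℕ) :
    IsChain G.Adj (((range' s m).map (Fc f)).reverse) := by
  rw [List.isChain_reverse]
  refine List.IsChain.imp ?_ (chainA hC s m)
  intro a b h; exact h.symm

lemma headA (s m : ℕ) (hm : m ≠ 0) :
    ((range' s m).map (Fc f)).head? = some (Fc f s) := by
  rcases m with _ | m; · omega
  rw [range'_succ]; simp

lemma lastA (s m : ℕ) (hm : m ≠ 0) :
    ((range' s m).map (Fc f)).getLast? = some (Fc f (s+m-1)) := by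
  rcases m with _ | m; · omega
  rw [range'_concat, map_append, map_singleton, List.getLast?_concat]
  congr 2
  omega

lemma headW (s m : ℕ) (hm : m ≠ 0) :
    (((range' s m).map (Fc f)).reverse).head? = some (Fc f (s+m-1)) := by
  rw [head?_reverse]; exact lastA s m hm

lemma lastW (s m : ℕ) (hm : m ≠ 0) :
    (((range' s m).map (Fc f)).reverse).getLast? = some (Fc f s) := by
  rw [getLast?_reverse]; exact headA s m hm

end helpers

private lemma cycle_of_list {V : Type*} (G : SimpleGraph V) (L : List V) (h3 : 3 ≤ L.length)
    (hnd : L.Nodup) (hchain : List.IsChain G.Adj L)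
    (hwrap : ∀ a ∈ L.getLast?, ∀ b ∈ L.head?, G.Adj a b) :
    ∃ g : ZMod L.length → V, IsCycleMap G g := by
  haveI : NeZero L.length := ⟨by omega⟩
  have hne : L ≠ [] := by intro hnil; rw [hnil] at h3; simp at h3
  refine ⟨fun i => L[i.val]'(ZMod.val_lt i), h3, ?_, ?_⟩
  · intro i j hij
    have := List.nodup_iff_injective_getElem.1 hnd
      (show (fun i : Fin L.length => L[(i : ℕ)]) ⟨i.val, ZMod.val_lt i⟩ =
        (fun i : Fin L.length => L[(i : ℕ)]) ⟨j.val, ZMod.val_lt j⟩ from hij)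
    exact ZMod.val_injective _ (by simpa using this)
  · intro i
    show G.Adj (L[i.val]'(ZMod.val_lt i)) (L[(i+1).val]'(ZMod.val_lt (i+1)))
    haveI : Fact (1 < L.length) := ⟨by omega⟩
    have hval : (i + 1).val = (i.val + 1) % L.length := by
      rw [ZMod.val_add, ZMod.val_one]
    have hvi : i.val < L.length := ZMod.val_lt i
    by_cases hcase : i.val + 1 < L.length
    · have h1 : (i+1).val = i.val + 1 := by rw [hval, Nat.mod_eq_of_lt hcase]
      have := (List.isChain_iff_getElem.1 hchain) i.val (by omega)
      simp only [h1]
      exact this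
    · have h2 : i.val + 1 = L.length := by omega
      have h1 : (i+1).val = 0 := by rw [hval, h2, Nat.mod_self]
      simp only [h1]
      refine hwrap _ ?_ _ ?_
      · rw [List.getLast?_eq_getLast hne, List.getLast_eq_getElem]
        simp only [show i.val = L.length - 1 by omega]
        rfl
      · rw [List.head?_eq_head hne]
        simp only [Option.mem_def, Option.some.injEq]
        exact (List.getElem_zero (by omega)).symm

lemma extend_contra {V : Type*} {G : SimpleGraph V} {n : ℕ} {f : ZMod n → V}
    (hC : IsLongestCycleMap G f) {h : V} (hh : h ∉ Set.range f)
    (I : List ℕ) (hlen : I.length = n)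
    (hpw : I.Pairwise (CNe n))
    (hchain : List.IsChain G.Adj (h :: I.map (Fc f)))
    (hlast : ∀ a ∈ (I.map (Fc f)).getLast?, G.Adj a h) : False := by
  have hn3 : 3 ≤ n := hC.1.1
  have hLlen : (h :: I.map (Fc f)).length = n + 1 := by simp [hlen]
  have hne : I.map (Fc f) ≠ [] := by
    intro hnil
    have := congrArg List.length hnil
    simp [hlen] at this
    omega
  have hnd : (h :: I.map (Fc f)).Nodup := by
    rw [List.nodup_cons]
    refine ⟨?_, ?_⟩
    · intro hmem
      rcases List.mem_map.1 hmem with ⟨t, _, heq⟩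
      exact hh ⟨_, heq⟩
    · exact hpw.map (Fc f) (fun a b hab heq => absurd (hC.1.2.1 heq) hab)
  have hwrap : ∀ a ∈ (h :: I.map (Fc f)).getLast?, ∀ b ∈ (h :: I.map (Fc f)).head?, G.Adj a b := by
    intro a ha b hb
    have hgl : (h :: I.map (Fc f)).getLast? = (I.map (Fc f)).getLast? := by
      rw [List.getLast?_cons, List.getLast?_eq_getLast hne]
      rfl
    rw [hgl] at ha
    simp only [List.head?_cons, Option.mem_def, Option.some.injEq] at hb
    subst hb
    exact hlast a ha
  obtain ⟨g, hg⟩ := cycle_of_list G _ (by rw [hLlen]; omega) hnd hchain hwrap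
  have := hC.2 _ g hg
  rw [hLlen] at this
  omega

/-- descending wrap piece -/
def Wl (s m : ℕ) : List ℕ := (List.range' s m).reverse
/-- ascending piece -/
def Al (s m : ℕ) : List ℕ := List.range' s m

section cons
variable {V : Type*} {G : SimpleGraph V} {n : ℕ} {f : ZMod n → V} {h : V}

lemma Fc_add (f : ZMod n → V) (t : ℕ) : Fc f (n + t) = Fc f t := by
  unfold Fc
  congr 1
  push_cast [ZMod.natCast_self]
  ring

/-- if `u_i u_j ∈ E` (with `i<j`) we get a longer cycle -/
lemma consUU (hC : IsLongestCycleMap G f) (hh : h ∉ Set.range f)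
    {a c : ℕ} (hac : a < c) (hcn : c + 1 < n)
    (hva : G.Adj h (Fc f a)) (hvc : G.Adj h (Fc f c))
    (huu : G.Adj (Fc f (a+1)) (Fc f (c+1))) : False := by
  refine extend_contra hC hh (Wl (c+1) (n+a-c) ++ Al (a+1) (c-a)) ?_ ?_ ?_ ?_
  · simp [Wl, Al]
    omega
  · rw [List.pairwise_append]
    refine ⟨?_, ?_, ?_⟩
    · rw [Wl, List.pairwise_reverse]
      exact pw_rng' _ _ (by omega)
    · exact pw_rng _ _ (by omega)
    · intro s hs t ht
      rw [Wl, List.mem_reverse, List.mem_range'_1] at hs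
      rw [Al, List.mem_range'_1] at ht
      exact cNe_symm (castNe (by omega) (by omega))
  · rw [List.map_append, show (Wl (c+1) (n+a-c)).map (Fc f) = ((List.range' (c+1) (n+a-c)).map (Fc f)).reverse by simp [Wl, List.map_reverse],
      show (Al (a+1) (c-a)).map (Fc f) = (List.range' (a+1) (c-a)).map (Fc f) by rfl]
    rw [List.isChain_cons]
    constructor
    · intro y hy
      rw [List.head?_append, headW _ _ (by omega)] at hy
      simp only [Option.or_some, Option.some_or, Option.mem_def, Option.some.injEq] at hy
      subst hy
      rw [show c+1+(n+a-c)-1 = n+a by omega, Fc_add]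
      exact hva
    · refine List.IsChain.append (chainW hC.1 _ _) (chainA hC.1 _ _) ?_
      intro u hu y hy
      rw [lastW _ _ (by omega)] at hu
      rw [headA _ _ (by omega)] at hy
      simp only [Option.mem_def, Option.some.injEq] at hu hy
      subst hu hy
      exact huu.symm
  · intro u hu
    rw [List.map_append, List.getLast?_append,
      show (Al (a+1) (c-a)).map (Fc f) = (List.range' (a+1) (c-a)).map (Fc f) by rfl,
      lastA _ _ (by omega)] at hu
    simp only [Option.or_some, Option.some_or, Option.mem_def, Option.some.injEq] at hu
    subst hu
    rw [show a+1+(c-a)-1 = c by omega]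
    exact hvc.symm
/-- if `h u_i ∈ E` we get a longer cycle -/
lemma consHU (hC : IsLongestCycleMap G f) (hh : h ∉ Set.range f)
    {a : ℕ} (han : a + 1 < n)
    (hva : G.Adj h (Fc f a)) (hua : G.Adj h (Fc f (a+1))) : False := by
  refine extend_contra hC hh (Wl (a+1) n) ?_ ?_ ?_ ?_
  · simp [Wl]
  · rw [Wl, List.pairwise_reverse]
    exact pw_rng' _ _ le_rfl
  · rw [show (Wl (a+1) n).map (Fc f) = ((List.range' (a+1) n).map (Fc f)).reverse by
      simp [Wl, List.map_reverse]]
    rw [List.isChain_cons]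
    refine ⟨?_, chainW hC.1 _ _⟩
    intro y hy
    rw [headW _ _ (by omega)] at hy
    simp only [Option.mem_def, Option.some.injEq] at hy
    subst hy
    rw [show a+1+n-1 = n+a by omega, Fc_add]
    exact hva
  · intro u hu
    rw [show (Wl (a+1) n).map (Fc f) = ((List.range' (a+1) n).map (Fc f)).reverse by
      simp [Wl, List.map_reverse], lastW _ _ (by omega)] at hu
    simp only [Option.mem_def, Option.some.injEq] at hu
    subst hu
    exact hua.symm

lemma map_Wl (f : ZMod n → V) (s m : ℕ) :
    (Wl s m).map (Fc f) = ((List.range' s m).map (Fc f)).reverse := by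
  simp [Wl, List.map_reverse]

lemma map_Al (f : ZMod n → V) (s m : ℕ) :
    (Al s m).map (Fc f) = (List.range' s m).map (Fc f) := rfl

/-- if `lx < rx` we get a longer cycle -/
lemma consRL (hC : IsLongestCycleMap G f) (hh : h ∉ Set.range f)
    {a b q : ℕ} (hab : a < b) (haq : a + 1 < q) (hbq : b + 1 < q) (hqn : q < n)
    (hva : G.Adj h (Fc f a)) (hvb : G.Adj h (Fc f b))
    (hxr : G.Adj (Fc f (b+1)) (Fc f (q+1)))
    (hxl : G.Adj (Fc f (a+1)) (Fc f q)) : False := by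
  refine extend_contra hC hh (Wl (q+1) (n+a-q) ++ (Al (b+1) (q-b) ++ Al (a+1) (b-a))) ?_ ?_ ?_ ?_
  · simp [Wl, Al]
    omega
  · rw [List.pairwise_append, List.pairwise_append]
    refine ⟨?_, ⟨pw_rng _ _ (by omega), pw_rng _ _ (by omega), ?_⟩, ?_⟩
    · rw [Wl, List.pairwise_reverse]
      exact pw_rng' _ _ (by omega)
    · intro s hs t ht
      rw [Al, List.mem_range'_1] at hs ht
      exact cNe_symm (castNe (by omega) (by omega))
    · intro s hs t ht
      rw [Wl, List.mem_reverse, List.mem_range'_1] at hs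
      rw [List.mem_append, Al, Al, List.mem_range'_1, List.mem_range'_1] at ht
      exact cNe_symm (castNe (by omega) (by omega))
  · rw [List.map_append, List.map_append, map_Wl, map_Al, map_Al, List.isChain_cons]
    constructor
    · intro y hy
      rw [List.head?_append, headW _ _ (by omega)] at hy
      simp only [Option.or_some, Option.some_or, Option.mem_def, Option.some.injEq] at hy
      subst hy
      rw [show q+1+(n+a-q)-1 = n+a by omega, Fc_add]
      exact hva
    · refine List.IsChain.append (chainW hC.1 _ _) ?_ ?_
      · refine List.IsChain.append (chainA hC.1 _ _) (chainA hC.1 _ _) ?_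
        intro u hu y hy
        rw [lastA _ _ (by omega)] at hu
        rw [headA _ _ (by omega)] at hy
        simp only [Option.mem_def, Option.some.injEq] at hu hy
        subst hu hy
        rw [show b+1+(q-b)-1 = q by omega]
        exact hxl.symm
      · intro u hu y hy
        rw [lastW _ _ (by omega)] at hu
        rw [List.head?_append, headA _ _ (by omega)] at hy
        simp only [Option.or_some, Option.some_or, Option.mem_def, Option.some.injEq] at hu hy
        subst hu hy
        exact hxr.symm
  · intro u hu
    rw [List.map_append, List.map_append, map_Wl, map_Al, map_Al,
      List.getLast?_append, List.getLast?_append, lastA _ _ (by omega)] at hu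
    simp only [Option.or_some, Option.some_or, Option.mem_def, Option.some.injEq] at hu
    subst hu
    rw [show a+1+(b-a)-1 = b by omega]
    exact hvb.symm

/-- if `u_lx⁺ ∈ N(h)` we get a longer cycle (given `rx ≤ lx`) -/
lemma consW (hC : IsLongestCycleMap G f) (hh : h ∉ Set.range f)
    {a b q : ℕ} (hba : b ≤ a) (haq : a + 1 < q) (hqn : q < n)
    (hvb : G.Adj h (Fc f b))
    (hxr : G.Adj (Fc f (b+1)) (Fc f (q+1)))
    (hxl : G.Adj (Fc f (a+1)) (Fc f q))
    (hw : G.Adj h (Fc f (a+2))) : False := by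
  refine extend_contra hC hh (Wl (q+1) (n+b-q) ++ (Al (b+1) (a-b+1) ++ Wl (a+2) (q-a-1))) ?_ ?_ ?_ ?_
  · simp [Wl, Al]
    omega
  · rw [List.pairwise_append, List.pairwise_append]
    refine ⟨?_, ⟨pw_rng _ _ (by omega), ?_, ?_⟩, ?_⟩
    · rw [Wl, List.pairwise_reverse]
      exact pw_rng' _ _ (by omega)
    · rw [Wl, List.pairwise_reverse]
      exact pw_rng' _ _ (by omega)
    · intro s hs t ht
      rw [Al, List.mem_range'_1] at hs
      rw [Wl, List.mem_reverse, List.mem_range'_1] at ht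
      exact castNe (by omega) (by omega)
    · intro s hs t ht
      rw [Wl, List.mem_reverse, List.mem_range'_1] at hs
      rw [List.mem_append, Al, Wl, List.mem_reverse, List.mem_range'_1, List.mem_range'_1] at ht
      exact cNe_symm (castNe (by omega) (by omega))
  · rw [List.map_append, List.map_append, map_Wl, map_Al, map_Wl, List.isChain_cons]
    constructor
    · intro y hy
      rw [List.head?_append, headW _ _ (by omega)] at hy
      simp only [Option.or_some, Option.some_or, Option.mem_def, Option.some.injEq] at hy
      subst hy
      rw [show q+1+(n+b-q)-1 = n+b by omega, Fc_add]
      exact hvb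
    · refine List.IsChain.append (chainW hC.1 _ _) ?_ ?_
      · refine List.IsChain.append (chainA hC.1 _ _) (chainW hC.1 _ _) ?_
        intro u hu y hy
        rw [lastA _ _ (by omega)] at hu
        rw [headW _ _ (by omega)] at hy
        simp only [Option.mem_def, Option.some.injEq] at hu hy
        subst hu hy
        rw [show b+1+(a-b+1)-1 = a+1 by omega, show a+2+(q-a-1)-1 = q by omega]
        exact hxl
      · intro u hu y hy
        rw [lastW _ _ (by omega)] at hu
        rw [List.head?_append, headA _ _ (by omega)] at hy
        simp only [Option.or_some, Option.some_or, Option.mem_def, Option.some.injEq] at hu hy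
        subst hu hy
        exact hxr.symm
  · intro u hu
    rw [List.map_append, List.map_append, map_Wl, map_Al, map_Wl,
      List.getLast?_append, List.getLast?_append, lastW _ _ (by omega)] at hu
    simp only [Option.or_some, Option.some_or, Option.mem_def, Option.some.injEq] at hu
    subst hu
    exact hw.symm

/-- if `u_lx⁺ u_m ∈ E` with `lx < m` we get a longer cycle -/
lemma consM1 (hC : IsLongestCycleMap G f) (hh : h ∉ Set.range f)
    {a b c q : ℕ} (hba : b ≤ a) (hac : a + 2 ≤ c) (hcq : c + 1 < q) (hqn : q < n)
    (hvb : G.Adj h (Fc f b)) (hvc : G.Adj h (Fc f c))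
    (hxr : G.Adj (Fc f (b+1)) (Fc f (q+1)))
    (hxl : G.Adj (Fc f (a+1)) (Fc f q))
    (hwm : G.Adj (Fc f (a+2)) (Fc f (c+1))) : False := by
  refine extend_contra hC hh
    (Wl (q+1) (n+b-q) ++ (Al (b+1) (a-b+1) ++ (Wl (c+1) (q-c) ++ Al (a+2) (c-a-1)))) ?_ ?_ ?_ ?_
  · simp [Wl, Al]
    omega
  · rw [List.pairwise_append, List.pairwise_append, List.pairwise_append]
    refine ⟨?_, ⟨pw_rng _ _ (by omega), ⟨?_, pw_rng _ _ (by omega), ?_⟩, ?_⟩, ?_⟩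
    · rw [Wl, List.pairwise_reverse]
      exact pw_rng' _ _ (by omega)
    · rw [Wl, List.pairwise_reverse]
      exact pw_rng' _ _ (by omega)
    · intro s hs t ht
      rw [Wl, List.mem_reverse, List.mem_range'_1] at hs
      rw [Al, List.mem_range'_1] at ht
      exact cNe_symm (castNe (by omega) (by omega))
    · intro s hs t ht
      rw [Al, List.mem_range'_1] at hs
      rw [List.mem_append, Wl, Al, List.mem_reverse, List.mem_range'_1, List.mem_range'_1] at ht
      exact castNe (by omega) (by omega)
    · intro s hs t ht
      rw [Wl, List.mem_reverse, List.mem_range'_1] at hs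
      rw [List.mem_append, List.mem_append, Al, Al, Wl, List.mem_reverse,
        List.mem_range'_1, List.mem_range'_1, List.mem_range'_1] at ht
      exact cNe_symm (castNe (by omega) (by omega))
  · rw [List.map_append, List.map_append, List.map_append, map_Wl, map_Al, map_Wl, map_Al,
      List.isChain_cons]
    constructor
    · intro y hy
      rw [List.head?_append, headW _ _ (by omega)] at hy
      simp only [Option.or_some, Option.some_or, Option.mem_def, Option.some.injEq] at hy
      subst hy
      rw [show q+1+(n+b-q)-1 = n+b by omega, Fc_add]
      exact hvb
    · refine List.IsChain.append (chainW hC.1 _ _) ?_ ?_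
      · refine List.IsChain.append (chainA hC.1 _ _) ?_ ?_
        · refine List.IsChain.append (chainW hC.1 _ _) (chainA hC.1 _ _) ?_
          intro u hu y hy
          rw [lastW _ _ (by omega)] at hu
          rw [headA _ _ (by omega)] at hy
          simp only [Option.mem_def, Option.some.injEq] at hu hy
          subst hu hy
          exact hwm.symm
        · intro u hu y hy
          rw [lastA _ _ (by omega)] at hu
          rw [List.head?_append, headW _ _ (by omega)] at hy
          simp only [Option.or_some, Option.some_or, Option.mem_def, Option.some.injEq] at hu hy
          subst hu hy
          rw [show b+1+(a-b+1)-1 = a+1 by omega, show c+1+(q-c)-1 = q by omega]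
          exact hxl
      · intro u hu y hy
        rw [lastW _ _ (by omega)] at hu
        rw [List.head?_append, headA _ _ (by omega)] at hy
        simp only [Option.or_some, Option.some_or, Option.mem_def, Option.some.injEq] at hu hy
        subst hu hy
        exact hxr.symm
  · intro u hu
    rw [List.map_append, List.map_append, List.map_append, map_Wl, map_Al, map_Wl, map_Al,
      List.getLast?_append, List.getLast?_append, List.getLast?_append, lastA _ _ (by omega)] at hu
    simp only [Option.or_some, Option.some_or, Option.mem_def, Option.some.injEq] at hu
    subst hu
    rw [show a+2+(c-a-1)-1 = c by omega]
    exact hvc.symm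

/-- if `u_lx⁺ u_m ∈ E` with `m < rx` we get a longer cycle -/
lemma consM2 (hC : IsLongestCycleMap G f) (hh : h ∉ Set.range f)
    {a b c q : ℕ} (hcb : c < b) (hba : b ≤ a) (haq : a + 1 < q) (hqn : q < n)
    (hvc : G.Adj h (Fc f c)) (hvb : G.Adj h (Fc f b))
    (hxr : G.Adj (Fc f (b+1)) (Fc f (q+1)))
    (hxl : G.Adj (Fc f (a+1)) (Fc f q))
    (hwm : G.Adj (Fc f (a+2)) (Fc f (c+1))) : False := by
  refine extend_contra hC hh
    (Wl (q+1) (n+c-q) ++ (Al (b+1) (a-b+1) ++ (Wl (a+2) (q-a-1) ++ Al (c+1) (b-c)))) ?_ ?_ ?_ ?_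
  · simp [Wl, Al]
    omega
  · rw [List.pairwise_append, List.pairwise_append, List.pairwise_append]
    refine ⟨?_, ⟨pw_rng _ _ (by omega), ⟨?_, pw_rng _ _ (by omega), ?_⟩, ?_⟩, ?_⟩
    · rw [Wl, List.pairwise_reverse]
      exact pw_rng' _ _ (by omega)
    · rw [Wl, List.pairwise_reverse]
      exact pw_rng' _ _ (by omega)
    · intro s hs t ht
      rw [Wl, List.mem_reverse, List.mem_range'_1] at hs
      rw [Al, List.mem_range'_1] at ht
      exact cNe_symm (castNe (by omega) (by omega))
    · intro s hs t ht
      rw [Al, List.mem_range'_1] at hs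
      rw [List.mem_append, Wl, Al, List.mem_reverse, List.mem_range'_1, List.mem_range'_1] at ht
      rcases ht with ht | ht
      · exact castNe (by omega) (by omega)
      · exact cNe_symm (castNe (by omega) (by omega))
    · intro s hs t ht
      rw [Wl, List.mem_reverse, List.mem_range'_1] at hs
      rw [List.mem_append, List.mem_append, Al, Al, Wl, List.mem_reverse,
        List.mem_range'_1, List.mem_range'_1, List.mem_range'_1] at ht
      exact cNe_symm (castNe (by omega) (by omega))
  · rw [List.map_append, List.map_append, List.map_append, map_Wl, map_Al, map_Wl, map_Al,
      List.isChain_cons]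
    constructor
    · intro y hy
      rw [List.head?_append, headW _ _ (by omega)] at hy
      simp only [Option.or_some, Option.some_or, Option.mem_def, Option.some.injEq] at hy
      subst hy
      rw [show q+1+(n+c-q)-1 = n+c by omega, Fc_add]
      exact hvc
    · refine List.IsChain.append (chainW hC.1 _ _) ?_ ?_
      · refine List.IsChain.append (chainA hC.1 _ _) ?_ ?_
        · refine List.IsChain.append (chainW hC.1 _ _) (chainA hC.1 _ _) ?_
          intro u hu y hy
          rw [lastW _ _ (by omega)] at hu
          rw [headA _ _ (by omega)] at hy
          simp only [Option.mem_def, Option.some.injEq] at hu hy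
          subst hu hy
          exact hwm
        · intro u hu y hy
          rw [lastA _ _ (by omega)] at hu
          rw [List.head?_append, headW _ _ (by omega)] at hy
          simp only [Option.or_some, Option.some_or, Option.mem_def, Option.some.injEq] at hu hy
          subst hu hy
          rw [show b+1+(a-b+1)-1 = a+1 by omega, show a+2+(q-a-1)-1 = q by omega]
          exact hxl
      · intro u hu y hy
        rw [lastW _ _ (by omega)] at hu
        rw [List.head?_append, headA _ _ (by omega)] at hy
        simp only [Option.or_some, Option.some_or, Option.mem_def, Option.some.injEq] at hu hy
        subst hu hy
        exact hxr.symm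
  · intro u hu
    rw [List.map_append, List.map_append, List.map_append, map_Wl, map_Al, map_Wl, map_Al,
      List.getLast?_append, List.getLast?_append, List.getLast?_append, lastA _ _ (by omega)] at hu
    simp only [Option.or_some, Option.some_or, Option.mem_def, Option.some.injEq] at hu
    subst hu
    rw [show c+1+(b-c)-1 = b by omega]
    exact hvb.symm
end cons

lemma keyCount {V : Type*} {G : SimpleGraph V} {k : ℕ} (hfree : P2kP1Free G k) {m : ℕ}
    (hm : k ≤ m) (z : Fin m → V) (hz : Function.Injective z) (x y : V) (hxy : G.Adj x y)
    (hzx : ∀ i, z i ≠ x) (hzy : ∀ i, z i ≠ y)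
    (hax : ∀ i, ¬ G.Adj x (z i)) (hay : ∀ i, ¬ G.Adj y (z i))
    (hzz : ∀ i j, ¬ G.Adj (z i) (z j)) : False := by
  refine hfree ⟨x, y, z ∘ Fin.castLE hm, ?_, fun i => hzx _, fun i => hzy _, hxy.ne, hxy,
    fun i => hax _, fun i => hay _, fun i j => hzz _ _⟩
  intro i j hij
  have h2 := congrArg Fin.val (hz hij)
  exact Fin.ext h2

lemma buildZ {V : Type*} {G : SimpleGraph V} {k : ℕ} (hfree : P2kP1Free G k) (hk : 4 ≤ k)
    {d : ℕ} (u : Fin d → V) (huinj : Function.Injective u)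
    (huu : ∀ i j, ¬ G.Adj (u i) (u j))
    (h y0 : V) (l0 : Fin d) (T : Finset (Fin d)) (hT : k - 1 ≤ T.card)
    (hadj : G.Adj y0 (u l0)) (hl0 : l0 ∉ T)
    (hhy0 : h ≠ y0) (hhadj0 : ¬ G.Adj y0 h) (hhadjh : ∀ i, ¬ G.Adj h (u i))
    (hh_notU : ∀ i, h ≠ u i)
    (hy0U : ∀ i, u i ≠ y0)
    (hT0 : ∀ i ∈ T, ¬ G.Adj y0 (u i)) : False := by
  obtain ⟨T', hT'sub, hT'card⟩ := Finset.exists_subset_card_eq hT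
  set g := T'.orderIsoOfFin hT'card with hg
  have hmemT : ∀ i, ((g i : Fin d)) ∈ T := fun i => hT'sub (g i).2
  refine keyCount hfree (m := (k-1)+1) (by omega)
    (Fin.cons h (fun i => u (g i))) ?_ y0 (u l0) hadj ?_ ?_ ?_ ?_ ?_
  · rw [Fin.cons_injective_iff]
    refine ⟨?_, ?_⟩
    · rintro ⟨i, hi⟩
      exact hh_notU _ hi.symm
    · intro i j hij
      exact g.injective (Subtype.ext (huinj hij))
  · intro i
    induction i using Fin.cases with
    | zero => simpa using hhy0
    | succ j => simpa using hy0U _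
  · intro i
    induction i using Fin.cases with
    | zero => simpa using hh_notU l0
    | succ j =>
      simp only [Fin.cons_succ]
      intro heq
      exact hT0 _ (hmemT j) (huinj heq ▸ hadj)
  · intro i
    induction i using Fin.cases with
    | zero => simpa using fun hq : G.Adj y0 h => hhadj0 hq
    | succ j => simpa using hT0 _ (hmemT j)
  · intro i
    induction i using Fin.cases with
    | zero => simpa using fun hq => hhadjh l0 hq.symm
    | succ j => simpa using huu l0 _
  · intro i j
    induction i using Fin.cases with
    | zero =>
      induction j using Fin.cases with
      | zero => simpa using G.irrefl
      | succ j' => simpa using hhadjh _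
    | succ i' =>
      induction j using Fin.cases with
      | zero => simpa using fun hq => hhadjh _ hq.symm
      | succ j' => simpa using huu _ _

lemma buildZ' {V : Type*} {G : SimpleGraph V} {k : ℕ} (hfree : P2kP1Free G k)
    {d : ℕ} (u : Fin d → V) (huinj : Function.Injective u)
    (huu : ∀ i j, ¬ G.Adj (u i) (u j))
    (y0 : V) (l0 : Fin d) (T : Finset (Fin d)) (hT : k ≤ T.card)
    (hadj : G.Adj y0 (u l0)) (hl0 : l0 ∉ T)
    (hy0U : ∀ i, u i ≠ y0)
    (hT0 : ∀ i ∈ T, ¬ G.Adj y0 (u i)) : False := by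
  obtain ⟨T', hT'sub, hT'card⟩ := Finset.exists_subset_card_eq hT
  set g := T'.orderIsoOfFin hT'card with hg
  have hmemT : ∀ i, ((g i : Fin d)) ∈ T := fun i => hT'sub (g i).2
  refine keyCount hfree le_rfl (fun i => u (g i)) ?_ y0 (u l0) hadj
    (fun i => hy0U _) ?_ (fun i => hT0 _ (hmemT i)) (fun i => huu l0 _) (fun i j => huu _ _)
  · intro i j hij
    exact g.injective (Subtype.ext (huinj hij))
  · intro i heq
    exact hT0 _ (hmemT i) (huinj heq ▸ hadj)

lemma ncard_nbhd {V : Type*} (G : SimpleGraph V) {d : ℕ} (u : Fin d → V)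
    (hu : Function.Injective u) (y : V) [DecidableEq V] [DecidablePred fun i => G.Adj y (u i)] :
    (G.neighborSet y ∩ Set.range u).ncard
      = (Finset.univ.filter fun i => G.Adj y (u i)).card := by
  have hset : G.neighborSet y ∩ Set.range u
      = ↑((Finset.univ.filter fun i => G.Adj y (u i)).image u) := by
    ext w
    simp only [Set.mem_inter_iff, SimpleGraph.mem_neighborSet, Set.mem_range,
      Finset.coe_image, Set.mem_image, Finset.mem_coe, Finset.mem_filter, Finset.mem_univ,
      true_and]
    constructor
    · rintro ⟨hadj, i, rfl⟩
      exact ⟨i, hadj, rfl⟩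
    · rintro ⟨i, hadj, rfl⟩
      exact ⟨hadj, i, rfl⟩
  rw [hset, Set.ncard_coe_finset, Finset.card_image_of_injective _ hu]

end helperZZ

/-- Claim 3.7: `G` is `(P₂ ∪ kP₁)`-free with `k ≥ 4`, `C` is a longest
cycle (parametrised by `f : ZMod n → V`, relabelled so that `v₁ = f 0`), `h ∉ V(C)` with
`N_G(h) ⊆ V(C)` and `d = |N_G(h)| ≥ k`.  The neighbours of `h` are `v_i = f (p i)` with
`p` strictly increasing and `p 0 = 0`; `u_i = f (p i + 1)` and `U = {u_i}`.  The vertex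
`x = f q` lies on the arc from `u_d⁺` to `v₁⁻` (i.e. `p i + 1 < q < n` for all `i`) and
`x, x⁺ ∈ N_G(U)`.  With `l_x` the least index with `u_{l_x} x ∈ E(G)` and `r_x` the
greatest index with `u_{r_x} x⁺ ∈ E(G)`:
(i) `N_G(x) ∩ U ⊆ {u_i : i ≥ l_x}` and `|N_G(x) ∩ U| ≥ d - k + 2`;
(ii) `N_G(x⁺) ∩ U ⊆ {u_i : i ≤ r_x}` and `|N_G(x⁺) ∩ U| ≥ d - k + 1`;
(iii) `r_x ≤ l_x`, `u_{l_x}⁺ ∉ N_G(h)`, `N_G(u_{l_x}⁺) ∩ U ⊆ {u_i : r_x ≤ i ≤ l_x}` and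
`|N_G(u_{l_x}⁺) ∩ U| ≥ d - k + 2`. -/



theorem stmt_12 {V : Type*} [Fintype V] (k : ℕ) (hk : 4 ≤ k) (G : SimpleGraph V)
    (hfree : P2kP1Free G k)
    (n : ℕ) (f : ZMod n → V) (hC : IsLongestCycleMap G f)
    (h : V) (hh : h ∉ Set.range f) (hNh : G.neighborSet h ⊆ Set.range f)
    (d : ℕ) (hkd : k ≤ d)
    (p : Fin d → ℕ) (hmono : StrictMono p) (hp0 : ∀ i₀ : Fin d, (i₀ : ℕ) = 0 → p i₀ = 0)
    (hpn : ∀ i, p i + 1 < n)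
    (hrange : G.neighborSet h = Set.range (fun i : Fin d => f ((p i : ZMod n))))
    (U : Set V) (hU : U = Set.range (fun i : Fin d => f ((p i : ZMod n) + 1)))
    (q : ℕ) (hq : q < n) (hqgt : ∀ i : Fin d, p i + 1 < q)
    (x : V) (hx : x = f (q : ZMod n))
    (hxN : x ∈ setNbhd G U) (hx1N : f ((q : ZMod n) + 1) ∈ setNbhd G U)
    (lx : Fin d) (hlx : G.Adj (f ((p lx : ZMod n) + 1)) x)
    (hlxmin : ∀ i : Fin d, G.Adj (f ((p i : ZMod n) + 1)) x → lx ≤ i)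
    (rx : Fin d) (hrx : G.Adj (f ((p rx : ZMod n) + 1)) (f ((q : ZMod n) + 1)))
    (hrxmax : ∀ i : Fin d, G.Adj (f ((p i : ZMod n) + 1)) (f ((q : ZMod n) + 1)) → i ≤ rx) :
    -- (i)
    ((∀ w ∈ G.neighborSet x ∩ U, ∃ i : Fin d, lx ≤ i ∧ w = f ((p i : ZMod n) + 1)) ∧
      d - k + 2 ≤ (G.neighborSet x ∩ U).ncard) ∧
    -- (ii)
    ((∀ w ∈ G.neighborSet (f ((q : ZMod n) + 1)) ∩ U,
        ∃ i : Fin d, i ≤ rx ∧ w = f ((p i : ZMod n) + 1)) ∧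
      d - k + 1 ≤ (G.neighborSet (f ((q : ZMod n) + 1)) ∩ U).ncard) ∧
    -- (iii)
    (rx ≤ lx ∧ f ((p lx : ZMod n) + 2) ∉ G.neighborSet h ∧
      (∀ w ∈ G.neighborSet (f ((p lx : ZMod n) + 2)) ∩ U,
        ∃ i : Fin d, rx ≤ i ∧ i ≤ lx ∧ w = f ((p i : ZMod n) + 1)) ∧
      d - k + 2 ≤ (G.neighborSet (f ((p lx : ZMod n) + 2)) ∩ U).ncard) := by
  classical
  haveI : NeZero n := ⟨by have := hC.1.1; omega⟩
  have hn3 : 3 ≤ n := hC.1.1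
  subst hx
  have hc1 : ∀ t : ℕ, f ((t : ZMod n) + 1) = Fc f (t+1) := fun t => by
    unfold Fc; congr 1; push_cast; ring
  have hc2 : ∀ t : ℕ, f ((t : ZMod n) + 2) = Fc f (t+2) := fun t => by
    unfold Fc; congr 1; push_cast; ring
  simp only [hc1, hc2] at hlx hlxmin hrx hrxmax hx1N hU ⊢
  set u : Fin d → V := fun i => Fc f (p i + 1) with hu_def
  have hUu : U = Set.range u := by
    rw [hU]
  have hFinj : ∀ {s t : ℕ}, s < n → t < n → Fc f s = Fc f t → s = t := by
    intro s t hs ht heq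
    have h2 : (s : ZMod n) = (t : ZMod n) := hC.1.2.1 heq
    have h3 := congrArg ZMod.val h2
    rwa [ZMod.val_cast_of_lt hs, ZMod.val_cast_of_lt ht] at h3
  have hpn' : ∀ i, p i + 1 < n := hpn
  have hplt : ∀ i, p i + 1 < q := hqgt
  have hqn : q < n := hq
  have hAdj_hv : ∀ i, G.Adj h (Fc f (p i)) := by
    intro i
    have : Fc f (p i) ∈ G.neighborSet h := by rw [hrange]; exact ⟨i, rfl⟩
    exact this
  have hAdj_h_iff : ∀ w, G.Adj h w → ∃ i, Fc f (p i) = w := by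
    intro w hw
    have : w ∈ G.neighborSet h := hw
    rw [hrange] at this
    exact this
  have u_inj : Function.Injective u := by
    intro i j hij
    have := hFinj (hpn' i) (hpn' j) hij
    exact hmono.injective (by omega)
  have FA : ∀ i, ¬ G.Adj h (u i) := fun i hadj => consHU hC hh (hpn' i) (hAdj_hv i) hadj
  have FB : ∀ i j, ¬ G.Adj (u i) (u j) := by
    intro i j hadj
    rcases lt_trichotomy (p i) (p j) with hlt | heq | hgt
    · exact consUU hC hh hlt (hpn' j) (hAdj_hv i) (hAdj_hv j) hadj
    · have hij : i = j := hmono.injective heq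
      subst hij
      exact G.irrefl hadj
    · exact consUU hC hh hgt (hpn' i) (hAdj_hv j) (hAdj_hv i) hadj.symm
  have hhf : ∀ t : ℕ, h ≠ Fc f t := fun t heq => hh ⟨_, heq.symm⟩
  have Fxh : ¬ G.Adj h (Fc f q) := by
    intro hadj
    obtain ⟨i, hi⟩ := hAdj_h_iff _ hadj
    have := hFinj (by have := hpn' i; omega) hqn hi
    have := hplt i
    omega
  have hxU : Fc f q ∉ U := hxN.1
  have hx1U : Fc f (q+1) ∉ U := hx1N.1
  rw [hUu] at hxU hx1U
  -- (iii).1 : rx ≤ lx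
  have hrl : rx ≤ lx := by
    by_contra hcon
    push_neg at hcon
    exact consRL hC hh (hmono hcon) (hplt lx) (hplt rx) hqn (hAdj_hv lx) (hAdj_hv rx) hrx hlx
  have hprl : p rx ≤ p lx := hmono.le_iff_le.2 hrl
  -- (iii).2 : u_lx⁺ ∉ N(h)
  have hwnh : ¬ G.Adj h (Fc f (p lx + 2)) := fun hadj =>
    consW hC hh hprl (hplt lx) hqn (hAdj_hv rx) hrx hlx hadj
  -- u_lx⁺ ∉ U
  have hwU : ∀ i, u i ≠ Fc f (p lx + 2) := by
    intro i heq
    have h2 := hFinj (hpn' i) (by have := hplt lx; omega) heq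
    have h3 : Fc f (p i) = u lx := by
      rw [hu_def]
      show Fc f (p i) = Fc f (p lx + 1)
      congr 1
      omega
    exact FA lx (h3 ▸ hAdj_hv i)
  -- (iii).3 : neighbours of u_lx⁺ in U are between rx and lx
  have hsub3 : ∀ i, G.Adj (Fc f (p lx + 2)) (u i) → rx ≤ i ∧ i ≤ lx := by
    intro i hadj
    constructor
    · by_contra hcon
      push_neg at hcon
      exact consM2 hC hh (hmono hcon) hprl (hplt lx) hqn (hAdj_hv i) (hAdj_hv rx) hrx hlx hadj
    · by_contra hcon
      push_neg at hcon
      have h1 : p lx < p i := hmono hcon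
      have h2 : p lx + 2 ≤ p i := by
        rcases Nat.lt_or_ge (p i) (p lx + 2) with h3 | h3
        · exfalso
          have h4 : Fc f (p i) = u lx := by
            rw [hu_def]
            show Fc f (p i) = Fc f (p lx + 1)
            congr 1
            omega
          exact FA lx (h4 ▸ hAdj_hv i)
        · exact h3
      exact consM1 hC hh hprl h2 (hplt i) hqn (hAdj_hv rx) (hAdj_hv i) hrx hlx hadj
  have hadj_w : G.Adj (Fc f (p lx + 2)) (u lx) := by
    have h2 := adjStep hC.1 (p lx + 1)
    rw [show p lx + 1 + 1 = p lx + 2 by ring] at h2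
    exact h2.symm
  -- counting
  have hcardsum : ∀ y : V,
      (Finset.univ.filter fun i => G.Adj y (u i)).card
        + (Finset.univ.filter fun i => ¬ G.Adj y (u i)).card = d := by
    intro y
    rw [Finset.card_filter_add_card_filter_not, Finset.card_univ, Fintype.card_fin]
  have hncard : ∀ y : V, (G.neighborSet y ∩ U).ncard
      = (Finset.univ.filter fun i => G.Adj y (u i)).card := by
    intro y
    rw [hUu]
    exact ncard_nbhd G u u_inj y
  -- (i).2
  have hT1 : (Finset.univ.filter fun i => ¬ G.Adj (f (q : ZMod n)) (u i)).card ≤ k - 2 := by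
    by_contra hcon
    push_neg at hcon
    refine buildZ hfree hk u u_inj FB h (f (q : ZMod n)) lx (Finset.univ.filter fun i => ¬ G.Adj (f (q : ZMod n)) (u i)) (by omega) hlx.symm ?_
      (hhf q) (fun hq' => Fxh hq'.symm) FA (fun i => hhf _) ?_ ?_
    · simp only [Finset.mem_filter, Finset.mem_univ, true_and, not_not]
      exact hlx.symm
    · intro i heq
      exact hxU ⟨i, heq⟩
    · intro i hi
      exact (Finset.mem_filter.1 hi).2
  -- (ii).2
  have hT2 : (Finset.univ.filter fun i => ¬ G.Adj (Fc f (q+1)) (u i)).card ≤ k - 1 := by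
    by_contra hcon
    push_neg at hcon
    refine buildZ' hfree u u_inj FB (Fc f (q+1)) rx (Finset.univ.filter fun i => ¬ G.Adj (Fc f (q+1)) (u i)) (by omega) hrx.symm ?_ ?_ ?_
    · simp only [Finset.mem_filter, Finset.mem_univ, true_and, not_not]
      exact hrx.symm
    · intro i heq
      exact hx1U ⟨i, heq⟩
    · intro i hi
      exact (Finset.mem_filter.1 hi).2
  -- (iii).4
  have hT3 : (Finset.univ.filter fun i => ¬ G.Adj (Fc f (p lx + 2)) (u i)).card ≤ k - 2 := by
    by_contra hcon
    push_neg at hcon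
    refine buildZ hfree hk u u_inj FB h (Fc f (p lx + 2)) lx (Finset.univ.filter fun i => ¬ G.Adj (Fc f (p lx + 2)) (u i)) (by omega) hadj_w ?_
      (hhf _) (fun hq' => hwnh hq'.symm) FA (fun i => hhf _) ?_ ?_
    · simp only [Finset.mem_filter, Finset.mem_univ, true_and, not_not]
      exact hadj_w
    · exact hwU
    · intro i hi
      exact (Finset.mem_filter.1 hi).2
  refine ⟨⟨?_, ?_⟩, ⟨?_, ?_⟩, hrl, hwnh, ?_, ?_⟩
  · rintro w ⟨hw1, hw2⟩
    rw [hUu] at hw2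
    obtain ⟨i, rfl⟩ := hw2
    exact ⟨i, hlxmin i hw1.symm, rfl⟩
  · have := hcardsum (f (q : ZMod n))
    rw [hncard (f (q : ZMod n))]
    omega
  · rintro w ⟨hw1, hw2⟩
    rw [hUu] at hw2
    obtain ⟨i, rfl⟩ := hw2
    exact ⟨i, hrxmax i hw1.symm, rfl⟩
  · have := hcardsum (Fc f (q+1))
    rw [hncard (Fc f (q+1))]
    omega
  · rintro w ⟨hw1, hw2⟩
    rw [hUu] at hw2
    obtain ⟨i, rfl⟩ := hw2
    obtain ⟨h1, h2⟩ := hsub3 i hw1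
    exact ⟨i, h1, h2, rfl⟩
  · have := hcardsum (Fc f (p lx + 2))
    rw [hncard (Fc f (p lx + 2))]
    omega
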